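/- arXiv:1905.08234 — 2 statements merged into one kernel-verified Lean document; each statement's English description precedes it below -/
import Mathlib

section
/- In the winner-bid auction with valuations v_l < v_h, for every Nash equilibrium σ there exists an integer p with v_l/2 ≤ p ≤ v_h/2 such that the support of the lower-valuation agent's strategy is contained in {0,...,p}, the support of the higher-valuation agent's strategy is contained in {p,...,p̄}, and p is in the support of the higher-valuation agent's strategy. -/
open Finset Filter

/-- Utility in the winner-bid auction for an agent with value `v` bidding `b`
when the opponent bids `c`: the higher bidder wins the object and pays their own
bid to the other agent; ties are broken uniformly at random. -/
noncomputable def util (v b c : ℕ) : ℝ :=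
  if c < b then (v : ℝ) - b
  else if b < c then (c : ℝ)
  else (((v : ℝ) - b) + b) / 2

/-- Expected utility of bidding `b` against the mixed strategy `σ` of the opponent. -/
noncomputable def eu (pbar v : ℕ) (σ : ℕ → ℝ) (b : ℕ) : ℝ :=
  ∑ c ∈ range (pbar + 1), σ c * util v b c

/-- A mixed strategy on the bid space `{0,...,pbar}`. -/
def IsStrategy (pbar : ℕ) (σ : ℕ → ℝ) : Prop :=
  (∀ b, 0 ≤ σ b) ∧ (∑ b ∈ range (pbar + 1), σ b = 1) ∧ ∀ b, pbar < b → σ b = 0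

/-- Nash equilibrium of the winner-bid auction with valuations `vl` (agent l) and
`vh` (agent h). -/
def IsNash (pbar vl vh : ℕ) (σl σh : ℕ → ℝ) : Prop :=
  IsStrategy pbar σl ∧ IsStrategy pbar σh ∧
  (∀ b ∈ range (pbar + 1), 0 < σl b →
    ∀ b' ∈ range (pbar + 1), eu pbar vl σh b' ≤ eu pbar vl σh b) ∧
  (∀ b ∈ range (pbar + 1), 0 < σh b →
    ∀ b' ∈ range (pbar + 1), eu pbar vh σl b' ≤ eu pbar vh σl b)

/-- Expected payoff of the agent with value `v` playing `σown` against `σopp`. -/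
noncomputable def payoff (pbar v : ℕ) (σown σopp : ℕ → ℝ) : ℝ :=
  ∑ b ∈ range (pbar + 1), σown b * eu pbar v σopp b

/-- Probability that the agent playing `σown` receives the object. -/
noncomputable def winProb (pbar : ℕ) (σown σopp : ℕ → ℝ) : ℝ :=
  ∑ b ∈ range (pbar + 1), ∑ c ∈ range (pbar + 1),
    σown b * σopp c * (if c < b then 1 else if b < c then 0 else 1 / 2)

/-- An equilibrium is efficient if the higher-valuation agent (playing `σh`)
receives the object with probability one, i.e., the lower-valuation agent
receives it with probability zero. -/
def Efficient (pbar : ℕ) (σl σh : ℕ → ℝ) : Prop := winProb pbar σl σh = 0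

/-- The pure strategy bidding `b`. -/
noncomputable def pureS (b : ℕ) : ℕ → ℝ := fun c => if c = b then 1 else 0

/-- Weak payoff monotonicity for the agent with value `v` playing `σown` against `σopp`. -/
def WPMon (pbar v : ℕ) (σown σopp : ℕ → ℝ) : Prop :=
  ∀ m ∈ range (pbar + 1), ∀ n ∈ range (pbar + 1),
    σown n < σown m → eu pbar v σopp n < eu pbar v σopp m

/-- (Full) payoff monotonicity for the agent with value `v`. -/
def PMon (pbar v : ℕ) (σown σopp : ℕ → ℝ) : Prop :=
  ∀ m ∈ range (pbar + 1), ∀ n ∈ range (pbar + 1),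
    (eu pbar v σopp n ≤ eu pbar v σopp m ↔ σown n ≤ σown m)

/-- Empirical equilibrium: a Nash equilibrium that is the pointwise limit of a
sequence of weakly payoff monotone strategy profiles. -/
def IsEmpirical (pbar vl vh : ℕ) (σl σh : ℕ → ℝ) : Prop :=
  IsNash pbar vl vh σl σh ∧
  ∃ s : ℕ → (ℕ → ℝ) × (ℕ → ℝ),
    (∀ n, IsStrategy pbar (s n).1 ∧ IsStrategy pbar (s n).2 ∧
      WPMon pbar vl (s n).1 (s n).2 ∧ WPMon pbar vh (s n).2 (s n).1) ∧
    ∀ b, Tendsto (fun n => (s n).1 b) atTop (nhds (σl b)) ∧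
         Tendsto (fun n => (s n).2 b) atTop (nhds (σh b))


lemma util_win {v b c : ℕ} (h : c < b) : util v b c = (v : ℝ) - b := by
  unfold util; rw [if_pos h]

lemma util_lose {v b c : ℕ} (h : b < c) : util v b c = (c : ℝ) := by
  unfold util; rw [if_neg (by omega), if_pos h]

lemma util_tie (v b : ℕ) : util v b b = (v : ℝ) / 2 := by
  unfold util; rw [if_neg (lt_irrefl b), if_neg (lt_irrefl b)]; ring

lemma eu_sub (pbar v b b' : ℕ) (σ : ℕ → ℝ) :
    eu pbar v σ b - eu pbar v σ b' =
      ∑ c ∈ range (pbar + 1), σ c * (util v b c - util v b' c) := by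
  unfold eu
  rw [← Finset.sum_sub_distrib]
  exact Finset.sum_congr rfl fun c _ => by ring

lemma contra (pbar v best alt : ℕ) (σ : ℕ → ℝ)
    (hle : eu pbar v σ alt ≤ eu pbar v σ best)
    (hpos : 0 < ∑ c ∈ range (pbar + 1), σ c * (util v alt c - util v best c)) :
    False := by
  have h := eu_sub pbar v alt best σ
  linarith

theorem stmt4 (vl vh pbar : ℕ) (hvl : 0 < vl) (hevl : Even vl) (hevh : Even vh)
    (hlt : vl < vh) (hpbar : vh / 2 + 2 ≤ pbar) (σl σh : ℕ → ℝ)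
    (hN : IsNash pbar vl vh σl σh) :
    ∃ p : ℕ, vl / 2 ≤ p ∧ p ≤ vh / 2 ∧
      (∀ b, 0 < σl b → b ≤ p) ∧ (∀ b, 0 < σh b → p ≤ b) ∧ 0 < σh p := by
  obtain ⟨⟨hlnn, hlsum, hlhi⟩, ⟨hhnn, hhsum, hhhi⟩, hNl, hNh⟩ := hN
  obtain ⟨na, hna⟩ := hevl
  obtain ⟨nb, hnb⟩ := hevh
  have hvlr : (vl : ℝ) = na + na := by exact_mod_cast hna
  have hvhr : (vh : ℝ) = nb + nb := by exact_mod_cast hnb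
  classical
  -- p = min of support of σh
  obtain ⟨p, hσhp, hppbar, hpmin⟩ :
      ∃ p, 0 < σh p ∧ p ≤ pbar ∧ ∀ x, 0 < σh x → p ≤ x := by
    have hexh : ∃ x ∈ range (pbar + 1), 0 < σh x := by
      by_contra hcon
      push_neg at hcon
      have h0 : ∑ x ∈ range (pbar + 1), σh x = 0 :=
        Finset.sum_eq_zero fun x hx => le_antisymm (hcon x hx) (hhnn x)
      rw [hhsum] at h0; norm_num at h0
    obtain ⟨x0, hx0, hx0p⟩ := hexh
    have hne : ((range (pbar + 1)).filter (fun x => 0 < σh x)).Nonempty :=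
      ⟨x0, Finset.mem_filter.2 ⟨hx0, hx0p⟩⟩
    refine ⟨((range (pbar + 1)).filter (fun x => 0 < σh x)).min' hne, ?_, ?_, ?_⟩
    · exact (Finset.mem_filter.1 (Finset.min'_mem _ hne)).2
    · have := (Finset.mem_filter.1 (Finset.min'_mem _ hne)).1
      rw [Finset.mem_range] at this; omega
    · intro x hx
      by_cases hxp : x ≤ pbar
      · exact Finset.min'_le _ _ (Finset.mem_filter.2 ⟨Finset.mem_range.2 (by omega), hx⟩)
      · have := hhhi x (by omega); rw [this] at hx; exact absurd hx (lt_irrefl 0)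
  have hσh0 : ∀ c, c < p → σh c = 0 := by
    intro c hc
    rcases lt_or_eq_of_le (hhnn c) with h | h
    · exact absurd (hpmin c h) (by omega)
    · exact h.symm
  -- q = max of support of σl
  obtain ⟨q, hσlq, hqpbar, hqmax⟩ :
      ∃ q, 0 < σl q ∧ q ≤ pbar ∧ ∀ x, 0 < σl x → x ≤ q := by
    have hexl : ∃ x ∈ range (pbar + 1), 0 < σl x := by
      by_contra hcon
      push_neg at hcon
      have h0 : ∑ x ∈ range (pbar + 1), σl x = 0 :=
        Finset.sum_eq_zero fun x hx => le_antisymm (hcon x hx) (hlnn x)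
      rw [hlsum] at h0; norm_num at h0
    obtain ⟨x0, hx0, hx0p⟩ := hexl
    have hne : ((range (pbar + 1)).filter (fun x => 0 < σl x)).Nonempty :=
      ⟨x0, Finset.mem_filter.2 ⟨hx0, hx0p⟩⟩
    refine ⟨((range (pbar + 1)).filter (fun x => 0 < σl x)).max' hne, ?_, ?_, ?_⟩
    · exact (Finset.mem_filter.1 (Finset.max'_mem _ hne)).2
    · have := (Finset.mem_filter.1 (Finset.max'_mem _ hne)).1
      rw [Finset.mem_range] at this; omega
    · intro x hx
      by_cases hxp : x ≤ pbar
      · exact Finset.le_max' _ _ (Finset.mem_filter.2 ⟨Finset.mem_range.2 (by omega), hx⟩)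
      · have := hlhi x (by omega); rw [this] at hx; exact absurd hx (lt_irrefl 0)
  have hσl0 : ∀ c, q < c → σl c = 0 := by
    intro c hc
    rcases lt_or_eq_of_le (hlnn c) with h | h
    · exact absurd (hqmax c h) (by omega)
    · exact h.symm
  -- Step 1 : if p < q then q ≤ na
  have step1 : p < q → q ≤ na := by
    intro hpq
    by_contra hq
    push_neg at hq
    obtain ⟨k, hk⟩ : ∃ k, q = k + 1 := ⟨q - 1, by omega⟩
    subst hk
    have hle := hNl (k + 1) (Finset.mem_range.2 (by omega)) hσlq k
      (Finset.mem_range.2 (by omega))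
    refine contra pbar vl (k + 1) k σh hle ?_
    apply Finset.sum_pos'
    · intro c hc
      apply mul_nonneg (hhnn c)
      by_cases h1 : c < k
      · rw [util_win h1, util_win (by omega)]
        push_cast; linarith
      · by_cases h2 : c = k
        · subst h2
          rw [util_tie, util_win (by omega)]
          have hc1 : (na : ℝ) ≤ c := by exact_mod_cast (by omega : na ≤ c)
          push_cast; linarith
        · by_cases h3 : c = k + 1
          · subst h3
            rw [util_lose (by omega), util_tie]
            have hc1 : (na : ℝ) + 1 ≤ (k : ℝ) + 1 := by
              exact_mod_cast (by omega : na + 1 ≤ k + 1)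
            push_cast; linarith
          · rw [util_lose (by omega), util_lose (by omega)]; simp
    · refine ⟨p, Finset.mem_range.2 (by omega), ?_⟩
      apply mul_pos hσhp
      by_cases h1 : p < k
      · rw [util_win h1, util_win (by omega)]
        push_cast; linarith
      · have hpk : p = k := by omega
        rw [hpk, util_tie, util_win (by omega)]
        have hc1 : (na : ℝ) ≤ k := by exact_mod_cast (by omega : na ≤ k)
        push_cast; linarith
  -- Step 2 : p ≤ nb
  have hpnb : p ≤ nb := by
    by_contra hcon
    push_neg at hcon
    have hex : ∃ c, c ≤ p ∧ 0 < σl c := by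
      by_contra hA
      push_neg at hA
      have hq : p < q := by
        by_contra hqp
        push_neg at hqp
        have := hA q hqp
        linarith
      have := step1 hq
      omega
    obtain ⟨c₀, hc₀p, hσc₀⟩ := hex
    obtain ⟨k, hk⟩ : ∃ k, p = k + 1 := ⟨p - 1, by omega⟩
    subst hk
    have hle := hNh (k + 1) (Finset.mem_range.2 (by omega)) hσhp k
      (Finset.mem_range.2 (by omega))
    refine contra pbar vh (k + 1) k σl hle ?_
    apply Finset.sum_pos'
    · intro c hc
      apply mul_nonneg (hlnn c)
      by_cases h1 : c < k
      · rw [util_win h1, util_win (by omega)]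
        push_cast; linarith
      · by_cases h2 : c = k
        · subst h2
          rw [util_tie, util_win (by omega)]
          have hc1 : (nb : ℝ) ≤ c := by exact_mod_cast (by omega : nb ≤ c)
          push_cast; linarith
        · by_cases h3 : c = k + 1
          · subst h3
            rw [util_lose (by omega), util_tie]
            have hc1 : (nb : ℝ) + 1 ≤ (k : ℝ) + 1 := by
              exact_mod_cast (by omega : nb + 1 ≤ k + 1)
            push_cast; linarith
          · rw [util_lose (by omega), util_lose (by omega)]; simp
    · refine ⟨c₀, Finset.mem_range.2 (by omega), ?_⟩
      apply mul_pos hσc₀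
      by_cases h1 : c₀ < k
      · rw [util_win h1, util_win (by omega)]
        push_cast; linarith
      · by_cases h2 : c₀ = k
        · subst h2
          rw [util_tie, util_win (by omega)]
          have hc1 : (nb : ℝ) ≤ c₀ := by exact_mod_cast (by omega : nb ≤ c₀)
          push_cast; linarith
        · have h3 : c₀ = k + 1 := by omega
          rw [h3, util_lose (by omega), util_tie]
          have hc1 : (nb : ℝ) + 1 ≤ (k : ℝ) + 1 := by
            exact_mod_cast (by omega : nb + 1 ≤ k + 1)
          push_cast; linarith
  -- Step 3 : q ≤ p
  have hqp : q ≤ p := by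
    by_contra hcon
    push_neg at hcon
    have hqna : q ≤ na := step1 hcon
    have hex : ∃ r, r < p ∧ 0 < σl r := by
      by_contra hA
      push_neg at hA
      have hσl0' : ∀ r, r < p → σl r = 0 := fun r hr => le_antisymm (hA r hr) (hlnn r)
      have hle := hNh p (Finset.mem_range.2 (by omega)) hσhp (q + 1)
        (Finset.mem_range.2 (by omega))
      refine contra pbar vh p (q + 1) σl hle ?_
      apply Finset.sum_pos'
      · intro c hc
        by_cases h1 : c < p
        · rw [hσl0' c h1]; simp
        · push_neg at h1
          apply mul_nonneg (hlnn c)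
          by_cases h2 : c = p
          · subst h2
            rw [util_win (by omega), util_tie]
            have e1 : (q : ℝ) ≤ na := by exact_mod_cast hqna
            have e2 : (na : ℝ) + 1 ≤ nb := by exact_mod_cast (by omega : na + 1 ≤ nb)
            push_cast; linarith
          · by_cases h3 : c < q + 1
            · rw [util_win h3, util_lose (by omega)]
              have e1 : (q : ℝ) + (c : ℝ) + 1 ≤ vh := by
                exact_mod_cast (by omega : q + c + 1 ≤ vh)
              push_cast; linarith
            · by_cases h4 : c = q + 1
              · subst h4
                rw [util_tie, util_lose (by omega)]
                have e1 : (q : ℝ) ≤ na := by exact_mod_cast hqna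
                have e2 : (na : ℝ) + 1 ≤ nb := by exact_mod_cast (by omega : na + 1 ≤ nb)
                push_cast; linarith
              · rw [util_lose (by omega), util_lose (by omega)]; simp
      · refine ⟨q, Finset.mem_range.2 (by omega), ?_⟩
        apply mul_pos hσlq
        rw [util_win (by omega), util_lose (by omega)]
        have e1 : (q : ℝ) + (q : ℝ) + 2 ≤ vh := by
          exact_mod_cast (by omega : q + q + 2 ≤ vh)
        push_cast; linarith
    obtain ⟨r, hrp, hσlr⟩ := hex
    have hle := hNl r (Finset.mem_range.2 (by omega)) hσlr q
      (Finset.mem_range.2 (by omega))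
    refine contra pbar vl r q σh hle ?_
    apply Finset.sum_pos'
    · intro c hc
      by_cases h1 : c < p
      · rw [hσh0 c h1]; simp
      · push_neg at h1
        apply mul_nonneg (hhnn c)
        by_cases h2 : c < q
        · rw [util_win h2, util_lose (by omega : r < c)]
          have e1 : (q : ℝ) + (c : ℝ) + 1 ≤ vl := by
            exact_mod_cast (by omega : q + c + 1 ≤ vl)
          linarith
        · by_cases h3 : c = q
          · subst h3
            rw [util_tie, util_lose (by omega : r < c)]
            have e1 : (c : ℝ) ≤ na := by exact_mod_cast (by omega : c ≤ na)
            linarith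
          · rw [util_lose (by omega : q < c), util_lose (by omega : r < c)]; simp
    · refine ⟨p, Finset.mem_range.2 (by omega), ?_⟩
      apply mul_pos hσhp
      rw [util_win hcon, util_lose hrp]
      have e1 : (q : ℝ) + (p : ℝ) + 1 ≤ vl := by
        exact_mod_cast (by omega : q + p + 1 ≤ vl)
      linarith
  -- Step 4 : na ≤ p
  have hnap : na ≤ p := by
    by_contra hcon
    push_neg at hcon
    have hex : ∃ r, r < p ∧ 0 < σl r := by
      by_contra hA
      push_neg at hA
      have hσl0' : ∀ r, r < p → σl r = 0 := fun r hr => le_antisymm (hA r hr) (hlnn r)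
      have hσlp : σl p = 1 := by
        have hs := hlsum
        rw [Finset.sum_eq_single p ?h1 ?h2] at hs
        · exact hs
        · intro b hb hbp
          rcases lt_or_gt_of_ne hbp with h | h
          · exact hσl0' b h
          · exact hσl0 b (by omega)
        · intro hp0; exact absurd (Finset.mem_range.2 (by omega)) hp0
      have hle := hNh p (Finset.mem_range.2 (by omega)) hσhp (p + 1)
        (Finset.mem_range.2 (by omega))
      refine contra pbar vh p (p + 1) σl hle ?_
      apply Finset.sum_pos'
      · intro c hc
        by_cases h1 : c = p
        · subst h1
          apply mul_nonneg (hlnn c)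
          rw [util_win (Nat.lt_succ_self c), util_tie]
          have e1 : (c : ℝ) + 1 ≤ na := by exact_mod_cast (by omega : c + 1 ≤ na)
          have e2 : (na : ℝ) + 1 ≤ nb := by exact_mod_cast (by omega : na + 1 ≤ nb)
          push_cast; linarith
        · have hz : σl c = 0 := by
            rcases lt_or_gt_of_ne h1 with h | h
            · exact hσl0' c h
            · exact hσl0 c (by omega)
          rw [hz]; simp
      · refine ⟨p, Finset.mem_range.2 (by omega), ?_⟩
        rw [hσlp, one_mul, util_win (Nat.lt_succ_self p), util_tie]
        have e1 : (p : ℝ) + 1 ≤ na := by exact_mod_cast (by omega : p + 1 ≤ na)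
        have e2 : (na : ℝ) + 1 ≤ nb := by exact_mod_cast (by omega : na + 1 ≤ nb)
        push_cast; linarith
    obtain ⟨r, hrp, hσlr⟩ := hex
    have hle := hNl r (Finset.mem_range.2 (by omega)) hσlr p
      (Finset.mem_range.2 (by omega))
    refine contra pbar vl r p σh hle ?_
    apply Finset.sum_pos'
    · intro c hc
      by_cases h1 : c < p
      · rw [hσh0 c h1]; simp
      · push_neg at h1
        apply mul_nonneg (hhnn c)
        by_cases h2 : c = p
        · subst h2
          rw [util_tie, util_lose (by omega : r < c)]
          have e1 : (c : ℝ) + 1 ≤ na := by exact_mod_cast (by omega : c + 1 ≤ na)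
          linarith
        · rw [util_lose (by omega : p < c), util_lose (by omega : r < c)]; simp
    · refine ⟨p, Finset.mem_range.2 (by omega), ?_⟩
      apply mul_pos hσhp
      rw [util_tie, util_lose hrp]
      have e1 : (p : ℝ) + 1 ≤ na := by exact_mod_cast (by omega : p + 1 ≤ na)
      linarith
  refine ⟨p, by omega, by omega, ?_, hpmin, hσhp⟩
  intro b hb
  exact le_trans (hqmax b hb) hqp
end

section
/- In the winner-bid auction with valuations v_l < v_h, the set of efficient Nash equilibrium payoff vectors equals {(v_l/2 + ES − t, v_h/2 + t) : t ∈ {0,1,...,ES}} where ES = (v_h − v_l)/2, i.e., exactly the integer divisions of the equity surplus. -/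
open Finset Filter

lemma sum_pure_mul (pbar c : ℕ) (hc : c ≤ pbar) (f : ℕ → ℝ) :
    ∑ b ∈ range (pbar + 1), pureS c b * f b = f c := by
  rw [Finset.sum_eq_single c]
  · simp [pureS]
  · intro x _ hne; simp [pureS, hne]
  · intro h; exact absurd (mem_range.2 (Nat.lt_succ_of_le hc)) h

lemma eu_pure (pbar v c b : ℕ) (hc : c ≤ pbar) :
    eu pbar v (pureS c) b = util v b c :=
  sum_pure_mul pbar c hc _

lemma pure_isStrategy (pbar c : ℕ) (hc : c ≤ pbar) : IsStrategy pbar (pureS c) := by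
  refine ⟨fun b => ?_, ?_, fun b hb => ?_⟩
  · unfold pureS; split <;> norm_num
  · have := sum_pure_mul pbar c hc (fun _ => 1)
    simpa using this
  · have : b ≠ c := by omega
    simp [pureS, this]

lemma eu_of_supp_lt (pbar v : ℕ) (σ : ℕ → ℝ) (hs : IsStrategy pbar σ) (b : ℕ)
    (h : ∀ x, σ x ≠ 0 → x < b) : eu pbar v σ b = (v : ℝ) - b := by
  unfold eu
  have hcong : ∀ x ∈ range (pbar + 1), σ x * util v b x = σ x * ((v : ℝ) - b) := by
    intro x _
    by_cases hz : σ x = 0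
    · simp [hz]
    · unfold util; rw [if_pos (h x hz)]
  rw [Finset.sum_congr rfl hcong, ← Finset.sum_mul, hs.2.1, one_mul]

lemma wb_exists_eq (vl vh pbar : ℕ) (hvl : 4 ≤ vl) (hevl : Even vl) (hevh : Even vh)
    (hlt : vl < vh) (hpbar : vh / 2 + 2 ≤ pbar) (t : ℕ) (ht : t ≤ (vh - vl) / 2) :
    ∃ σl σh : ℕ → ℝ, IsNash pbar vl vh σl σh ∧ Efficient pbar σl σh ∧
      payoff pbar vl σl σh = ((vl / 2 + ((vh - vl) / 2 - t) : ℕ) : ℝ) ∧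
      payoff pbar vh σh σl = ((vh / 2 + t : ℕ) : ℝ) := by
  obtain ⟨a, ha⟩ := hevl
  obtain ⟨c, hc⟩ := hevh
  set p : ℕ := vh / 2 - t with hpdef
  have hap : a ≤ p := by omega
  have hpc : p ≤ c := by omega
  have ha2 : 2 ≤ a := by omega
  have hppbar : p ≤ pbar := by omega
  have hp1pbar : p - 1 ≤ pbar := by omega
  have hcp : ((p : ℝ)) ≥ (a : ℝ) := by exact_mod_cast hap
  have hcp2 : ((p : ℝ)) ≤ (c : ℝ) := by exact_mod_cast hpc
  have hca : (2 : ℝ) ≤ (a : ℝ) := by exact_mod_cast ha2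
  have hvlr : (vl : ℝ) = 2 * a := by rw [ha]; push_cast; ring
  have hvhr : (vh : ℝ) = 2 * c := by rw [hc]; push_cast; ring
  have hp1 : ((p - 1 : ℕ) : ℝ) = (p : ℝ) - 1 := by
    have : 1 ≤ p := by omega
    push_cast [this]; ring
  refine ⟨pureS (p - 1), pureS p, ⟨pure_isStrategy pbar (p-1) hp1pbar,
    pure_isStrategy pbar p hppbar, ?_, ?_⟩, ?_, ?_, ?_⟩
  · -- l's best response
    intro b _ hpos b' hb'
    have hb : b = p - 1 := by
      by_contra hne; simp [pureS, hne] at hpos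
    subst hb
    rw [eu_pure pbar vl p b' hppbar, eu_pure pbar vl p (p-1) hppbar]
    have hupd : util vl (p - 1) p = (p : ℝ) := by
      unfold util
      rw [if_neg (by omega), if_pos (by omega)]
    rw [hupd]
    unfold util
    split_ifs with h1 h2
    · -- p < b' : vl - b' ≤ p
      have : ((p : ℝ)) + 1 ≤ (b' : ℝ) := by exact_mod_cast h1
      linarith
    · exact le_refl _
    · -- tie: b' = p
      linarith
  · -- h's best response
    intro b _ hpos b' hb'
    have hb : b = p := by
      by_contra hne; simp [pureS, hne] at hpos
    subst hb
    rw [eu_pure pbar vh (p-1) b' hp1pbar, eu_pure pbar vh (p-1) p hp1pbar]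
    have hupd : util vh p (p - 1) = (vh : ℝ) - p := by
      unfold util
      rw [if_pos (by omega)]
    rw [hupd]
    unfold util
    split_ifs with h1 h2
    · -- p - 1 < b' : vh - b' ≤ vh - p
      have : ((p : ℝ)) ≤ (b' : ℝ) := by exact_mod_cast (by omega : p ≤ b')
      linarith
    · -- b' < p - 1 : payoff p-1 ≤ vh - p
      rw [hp1]; linarith
    · -- tie
      linarith
  · -- Efficient
    unfold Efficient winProb
    rw [Finset.sum_eq_single (p - 1)]
    · rw [Finset.sum_eq_single p]
      · rw [if_neg (by omega), if_pos (by omega)]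
        simp
      · intro x _ hne; simp [pureS, hne]
      · intro h; exact absurd (mem_range.2 (by omega)) h
    · intro x _ hne; simp [pureS, hne]
    · intro h; exact absurd (mem_range.2 (by omega)) h
  · -- payoff l
    unfold payoff
    rw [show (fun b => pureS (p-1) b * eu pbar vl (pureS p) b) = _ from rfl]
    rw [sum_pure_mul pbar (p-1) hp1pbar (fun b => eu pbar vl (pureS p) b)]
    rw [eu_pure pbar vl p (p-1) hppbar]
    unfold util
    rw [if_neg (by omega), if_pos (by omega)]
    have : vl / 2 + ((vh - vl) / 2 - t) = p := by omega
    rw [this]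
  · -- payoff h
    unfold payoff
    rw [sum_pure_mul pbar p hppbar (fun b => eu pbar vh (pureS (p-1)) b)]
    rw [eu_pure pbar vh (p-1) p hp1pbar]
    unfold util
    rw [if_pos (by omega)]
    have hnat : vh / 2 + t = vh - p := by omega
    rw [hnat]
    have : p ≤ vh := by omega
    push_cast [this]
    ring

lemma wb_nec (vl vh pbar : ℕ) (hvl : 4 ≤ vl) (hevl : Even vl) (hevh : Even vh)
    (hlt : vl < vh) (hpbar : vh / 2 + 2 ≤ pbar) (σl σh : ℕ → ℝ)
    (hN : IsNash pbar vl vh σl σh) (hE : Efficient pbar σl σh) :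
    ∃ t ≤ (vh - vl) / 2,
      payoff pbar vl σl σh = ((vl / 2 + ((vh - vl) / 2 - t) : ℕ) : ℝ) ∧
      payoff pbar vh σh σl = ((vh / 2 + t : ℕ) : ℝ) := by
  obtain ⟨hSl, hSh, hNl, hNh⟩ := hN
  obtain ⟨a, ha⟩ := hevl
  obtain ⟨c, hc⟩ := hevh
  have hvlr : (vl : ℝ) = 2 * a := by rw [ha]; push_cast; ring
  have hvhr : (vh : ℝ) = 2 * c := by rw [hc]; push_cast; ring
  -- efficiency: each term of winProb is zero
  have hterm : ∀ b ∈ range (pbar + 1), ∀ c' ∈ range (pbar + 1),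
      σl b * σh c' * (if c' < b then (1:ℝ) else if b < c' then 0 else 1/2) = 0 := by
    have h0 : ∑ b ∈ range (pbar + 1), ∑ c' ∈ range (pbar + 1),
        σl b * σh c' * (if c' < b then (1:ℝ) else if b < c' then 0 else 1/2) = 0 := hE
    have hnn : ∀ b c', (0:ℝ) ≤ σl b * σh c' * (if c' < b then (1:ℝ) else if b < c' then 0 else 1/2) := by
      intro b c'
      have hind : (0:ℝ) ≤ (if c' < b then (1:ℝ) else if b < c' then 0 else 1/2) := by
        split_ifs <;> norm_num
      exact mul_nonneg (mul_nonneg (hSl.1 b) (hSh.1 c')) hind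
    rw [Finset.sum_eq_zero_iff_of_nonneg
      (fun b _ => Finset.sum_nonneg (fun c' _ => hnn b c'))] at h0
    intro b hb c' hc'
    have := h0 b hb
    rw [Finset.sum_eq_zero_iff_of_nonneg (fun c' _ => hnn b c')] at this
    exact this c' hc'
  have key : ∀ b c', 0 < σl b → 0 < σh c' → b < c' := by
    intro b c' hb hc'
    by_contra hbc
    push_neg at hbc
    have hbr : b ∈ range (pbar + 1) := by
      refine mem_range.2 ?_
      by_contra h
      have := hSl.2.2 b (by omega)
      linarith
    have hcr : c' ∈ range (pbar + 1) := by
      refine mem_range.2 ?_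
      by_contra h
      have := hSh.2.2 c' (by omega)
      linarith
    have h := hterm b hbr c' hcr
    have hind : (0:ℝ) < (if c' < b then (1:ℝ) else if b < c' then 0 else 1/2) := by
      split_ifs with h1 h2
      · norm_num
      · omega
      · norm_num
    nlinarith [mul_pos (mul_pos hb hc') hind]
  -- support of σh
  have hsuph : ∃ p, 0 < σh p := by
    by_contra h
    push_neg at h
    have hz : ∑ b ∈ range (pbar + 1), σh b = 0 :=
      Finset.sum_eq_zero (fun x _ => le_antisymm (h x) (hSh.1 x))
    rw [hSh.2.1] at hz
    norm_num at hz
  obtain ⟨p, hp⟩ := hsuph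
  have hppbar : p ≤ pbar := by
    by_contra h
    have := hSh.2.2 p (by omega)
    linarith
  have hpr : p ∈ range (pbar + 1) := mem_range.2 (by omega)
  have heuh : ∀ x, 0 < σh x → eu pbar vh σl x = (vh : ℝ) - x := by
    intro x hx
    refine eu_of_supp_lt pbar vh σl hSl x (fun y hy => ?_)
    exact key y x (lt_of_le_of_ne (hSl.1 y) (Ne.symm hy)) hx
  have huniq : ∀ x, 0 < σh x → x = p := by
    intro x hx
    have hxr : x ∈ range (pbar + 1) := by
      refine mem_range.2 ?_
      by_contra h
      have := hSh.2.2 x (by omega)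
      linarith
    have h1 := hNh p hpr hp x hxr
    have h2 := hNh x hxr hx p hpr
    rw [heuh x hx, heuh p hp] at h1 h2
    have : (x : ℝ) = p := by linarith
    exact_mod_cast this
  have hzero : ∀ x, x ≠ p → σh x = 0 := by
    intro x hx
    by_contra h
    exact hx (huniq x (lt_of_le_of_ne (hSh.1 x) (Ne.symm h)))
  have hone : σh p = 1 := by
    have hs := hSh.2.1
    rw [Finset.sum_eq_single p (fun x _ hx => hzero x hx) (fun h => absurd hpr h)] at hs
    exact hs
  have hσh : σh = pureS p := by
    funext x
    by_cases hx : x = p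
    · rw [hx, hone]; simp [pureS]
    · rw [hzero x hx]; simp [pureS, hx]
  -- support of σl
  have hsupl : ∃ b0, 0 < σl b0 := by
    by_contra h
    push_neg at h
    have hz : ∑ b ∈ range (pbar + 1), σl b = 0 :=
      Finset.sum_eq_zero (fun x _ => le_antisymm (h x) (hSl.1 x))
    rw [hSl.2.1] at hz
    norm_num at hz
  obtain ⟨b0, hb0⟩ := hsupl
  have hb0p : b0 < p := key b0 p hb0 hp
  have hp1 : 1 ≤ p := by omega
  have hb0r : b0 ∈ range (pbar + 1) := mem_range.2 (by omega)
  have hcp1 : ((p - 1 : ℕ) : ℝ) = (p : ℝ) - 1 := by push_cast [hp1]; ring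
  -- lower bound a ≤ p
  have hlow : a ≤ p := by
    have h := hNl b0 hb0r hb0 p hpr
    rw [hσh, eu_pure pbar vl p p hppbar, eu_pure pbar vl p b0 hppbar] at h
    unfold util at h
    rw [if_neg (lt_irrefl p), if_neg (lt_irrefl p), if_neg (by omega : ¬ p < b0),
      if_pos hb0p] at h
    have : (a : ℝ) ≤ p := by rw [hvlr] at h; linarith
    exact_mod_cast this
  -- σl (p-1) > 0
  have hq : 0 < σl (p - 1) := by
    by_contra h
    push_neg at h
    have hq0 : σl (p - 1) = 0 := le_antisymm h (hSl.1 _)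
    have hlt2 : ∀ y, σl y ≠ 0 → y < p - 1 := by
      intro y hy
      have hyp : y < p := key y p (lt_of_le_of_ne (hSl.1 y) (Ne.symm hy)) hp
      have : y ≠ p - 1 := fun he => hy (he ▸ hq0)
      omega
    have he1 : eu pbar vh σl (p - 1) = (vh : ℝ) - (p - 1 : ℕ) :=
      eu_of_supp_lt pbar vh σl hSl (p - 1) hlt2
    have h2 := hNh p hpr hp (p - 1) (mem_range.2 (by omega))
    rw [he1, heuh p hp, hcp1] at h2
    linarith
  -- q ≤ 1
  have hq1 : σl (p - 1) ≤ 1 := by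
    have hm : p - 1 ∈ range (pbar + 1) := mem_range.2 (by omega)
    have := Finset.single_le_sum (fun x (_ : x ∈ range (pbar + 1)) => hSl.1 x) hm
    rw [hSl.2.1] at this
    exact this
  -- eu_h (p-1) computation
  have hsplit : eu pbar vh σl (p - 1)
      = σl (p - 1) * ((vh : ℝ) / 2) + (1 - σl (p - 1)) * ((vh : ℝ) - ((p : ℝ) - 1)) := by
    unfold eu
    have hm : p - 1 ∈ range (pbar + 1) := mem_range.2 (by omega)
    rw [← Finset.add_sum_erase _ _ hm]
    have h1 : σl (p - 1) * util vh (p - 1) (p - 1) = σl (p - 1) * ((vh : ℝ) / 2) := by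
      unfold util
      rw [if_neg (lt_irrefl _), if_neg (lt_irrefl _)]
      ring
    have hcong : ∀ x ∈ (range (pbar + 1)).erase (p - 1),
        σl x * util vh (p - 1) x = σl x * ((vh : ℝ) - ((p : ℝ) - 1)) := by
      intro x hx
      by_cases hz : σl x = 0
      · rw [hz]; ring
      · have hxp : x < p := key x p (lt_of_le_of_ne (hSl.1 x) (Ne.symm hz)) hp
        have hxne : x ≠ p - 1 := (Finset.mem_erase.1 hx).1
        have hxlt : x < p - 1 := by omega
        unfold util
        rw [if_pos hxlt, hcp1]
    rw [h1, Finset.sum_congr rfl hcong, ← Finset.sum_mul]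
    have hs : ∑ x ∈ (range (pbar + 1)).erase (p - 1), σl x = 1 - σl (p - 1) := by
      have h2 := Finset.add_sum_erase (range (pbar + 1)) σl hm
      rw [hSl.2.1] at h2
      linarith
    rw [hs]
  -- upper bound p ≤ c
  have hhigh : p ≤ c := by
    by_contra h
    have hpc' : (c : ℝ) + 1 ≤ p := by exact_mod_cast (by omega : c + 1 ≤ p)
    have hineq := hNh p hpr hp (p - 1) (mem_range.2 (by omega))
    rw [hsplit, heuh p hp] at hineq
    nlinarith [mul_nonneg hq.le (by linarith : (0:ℝ) ≤ (p : ℝ) - c - 1)]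
  -- payoffs
  have hpayl : payoff pbar vl σl σh = (p : ℝ) := by
    unfold payoff
    have hcong : ∀ b ∈ range (pbar + 1), σl b * eu pbar vl σh b = σl b * (p : ℝ) := by
      intro b _
      by_cases hz : σl b = 0
      · rw [hz]; ring
      · have hbp : b < p := key b p (lt_of_le_of_ne (hSl.1 b) (Ne.symm hz)) hp
        rw [hσh, eu_pure pbar vl p b hppbar]
        unfold util
        rw [if_neg (by omega : ¬ p < b), if_pos hbp]
    rw [Finset.sum_congr rfl hcong, ← Finset.sum_mul, hSl.2.1, one_mul]
  have hpayh : payoff pbar vh σh σl = (vh : ℝ) - p := by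
    unfold payoff
    rw [hσh, sum_pure_mul pbar p hppbar (fun b => eu pbar vh σl b)]
    exact heuh p hp
  refine ⟨c - p, by omega, ?_, ?_⟩
  · have hn : vl / 2 + ((vh - vl) / 2 - (c - p)) = p := by omega
    rw [hn, hpayl]
  · have hn : vh / 2 + (c - p) = vh - p := by omega
    rw [hn, hpayh]
    have hple : p ≤ vh := by omega
    push_cast [hple]
    ring

theorem stmt7 (vl vh pbar : ℕ) (hvl : 4 ≤ vl) (hevl : Even vl) (hevh : Even vh)
    (hlt : vl < vh) (hpbar : vh / 2 + 2 ≤ pbar) :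
    ∀ πl πh : ℝ,
      (∃ σl σh : ℕ → ℝ, IsNash pbar vl vh σl σh ∧ Efficient pbar σl σh ∧
        payoff pbar vl σl σh = πl ∧ payoff pbar vh σh σl = πh) ↔
      ∃ t ≤ (vh - vl) / 2,
        πl = ((vl / 2 + ((vh - vl) / 2 - t) : ℕ) : ℝ) ∧ πh = ((vh / 2 + t : ℕ) : ℝ) := by
  intro pl ph
  constructor
  · rintro ⟨σl, σh, hN, hE, hpl, hph⟩
    obtain ⟨t, ht, h1, h2⟩ := wb_nec vl vh pbar hvl hevl hevh hlt hpbar σl σh hN hE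
    exact ⟨t, ht, hpl ▸ h1, hph ▸ h2⟩
  · rintro ⟨t, ht, h1, h2⟩
    obtain ⟨σl, σh, hN, hE, h3, h4⟩ := wb_exists_eq vl vh pbar hvl hevl hevh hlt hpbar t ht
    exact ⟨σl, σh, hN, hE, h1 ▸ h3, h2 ▸ h4⟩
end
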